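/- arXiv:2202.01223 — 3 statements merged into one kernel-verified Lean document; each statement's English description precedes it below -/
import Mathlib

section
/- Fix an integer N ≥ 0. For a βγ-module M set K_N(M) = {v ∈ M : β_k·v = 0 and γ_k·v = 0 for all k > N}. Let 0 → U → V → W → 0 be a short exact sequence of βγ-modules such that V is smooth and such that for every j > N the operators β_j and γ_j act locally nilpotently on U (i.e. for each u ∈ U there exists m with β_j^m·u = 0 and γ_j^m·u = 0). Then the induced sequence 0 → K_N(U) → K_N(V) → K_N(W) → 0 is exact; in particular every element of K_N(W) lifts to an element of K_N(V). (This is the core of Lemma 2.3.2 of the paper, which reduces extensions of βγ-modules induced from the finite Weyl algebra A_N to extensions of A_N-modules.) -/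
noncomputable section

/-- A module-candidate for the βγ algebra: a complex vector space together with
operators giving the action of the modes `β_n` and `γ_n`. -/
structure BGRep : Type 1 where
  carrier : Type
  [isAddCommGroup : AddCommGroup carrier]
  [isModule : Module ℂ carrier]
  B : ℤ → (carrier →ₗ[ℂ] carrier)
  G : ℤ → (carrier →ₗ[ℂ] carrier)

attribute [instance] BGRep.isAddCommGroup BGRep.isModule

namespace BGRep

/-- The defining commutation relations of the βγ algebra. -/
def IsRep (M : BGRep) : Prop :=
  (∀ m n : ℤ, M.B m ∘ₗ M.B n = M.B n ∘ₗ M.B m) ∧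
  (∀ m n : ℤ, M.G m ∘ₗ M.G n = M.G n ∘ₗ M.G m) ∧
  (∀ m n : ℤ, M.B m ∘ₗ M.G n - M.G n ∘ₗ M.B m =
    if m = -n then -(LinearMap.id : M.carrier →ₗ[ℂ] M.carrier) else 0)

/-- Smoothness: every vector is annihilated by all sufficiently positive modes. -/
def Smooth (M : BGRep) : Prop :=
  ∀ v : M.carrier, ∃ K : ℤ, ∀ k : ℤ, K < k → M.B k v = 0 ∧ M.G k v = 0

/-- A homomorphism of βγ-modules. -/
structure Hom (M N : BGRep) where
  toLin : M.carrier →ₗ[ℂ] N.carrier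
  commB : ∀ (n : ℤ) (v : M.carrier), toLin (M.B n v) = N.B n (toLin v)
  commG : ∀ (n : ℤ) (v : M.carrier), toLin (M.G n v) = N.G n (toLin v)

/-- `K_N(M)`: the subspace of vectors killed by all modes `β_k`, `γ_k` with `k > N`. -/
def KN (M : BGRep) (N : ℤ) : Submodule ℂ M.carrier where
  carrier := {v | ∀ k : ℤ, N < k → M.B k v = 0 ∧ M.G k v = 0}
  zero_mem' := fun k _ => ⟨map_zero _, map_zero _⟩
  add_mem' := fun ha hb k hk =>
    ⟨by rw [map_add, (ha k hk).1, (hb k hk).1, add_zero],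
     by rw [map_add, (ha k hk).2, (hb k hk).2, add_zero]⟩
  smul_mem' := fun c v hv k hk =>
    ⟨by rw [map_smul, (hv k hk).1, smul_zero], by rw [map_smul, (hv k hk).2, smul_zero]⟩

end BGRep

private lemma pre_aux {M : Type} [AddCommGroup M] [Module ℂ M]
    (a b : M →ₗ[ℂ] M) (s : ℂ) (hs : s ≠ 0)
    (h : ∀ x, a (b x) = b (a x) + s • x)
    (S : Submodule ℂ M) (hSa : ∀ y ∈ S, a y ∈ S) (hSb : ∀ y ∈ S, b y ∈ S) :
    ∀ m : ℕ, ∀ x : M, (a ^ m) x = 0 → x ∈ S → ∀ k : ℕ, ∃ c ∈ S, (a ^ k) c = x := by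
  have hpa : ∀ (k : ℕ), ∀ y ∈ S, (a ^ k) y ∈ S := by
    intro k
    induction k with
    | zero => intro y hy; simpa using hy
    | succ k ih =>
        intro y hy
        rw [pow_succ, Module.End.mul_apply]
        exact ih _ (hSa y hy)
  have hpb : ∀ (k : ℕ), ∀ y ∈ S, (b ^ k) y ∈ S := by
    intro k
    induction k with
    | zero => intro y hy; simpa using hy
    | succ k ih =>
        intro y hy
        rw [pow_succ, Module.End.mul_apply]
        exact ih _ (hSb y hy)
  have hA : ∀ z : M, a z = 0 → ∀ k : ℕ, a ((b ^ (k+1)) z) = ((k : ℂ) + 1) • s • (b ^ k) z := by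
    intro z hz k
    induction k with
    | zero => simp [h z, hz]
    | succ k ih =>
        have e1 : (b ^ (k+1+1)) z = b ((b ^ (k+1)) z) := by
          rw [pow_succ', Module.End.mul_apply]
        have e2 : b ((b ^ k) z) = (b ^ (k+1)) z := by
          rw [pow_succ', Module.End.mul_apply]
        rw [e1, h, ih, map_smul, map_smul, e2]
        push_cast
        module
  have hB : ∀ z : M, a z = 0 → ∀ k : ℕ,
      (a ^ k) ((b ^ k) z) = (k.factorial : ℂ) • s ^ k • z := by
    intro z hz k
    induction k with
    | zero => simp
    | succ k ih =>
        have e1 : (a ^ (k+1)) ((b ^ (k+1)) z) = (a ^ k) (a ((b ^ (k+1)) z)) := by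
          rw [pow_succ, Module.End.mul_apply]
        rw [e1, hA z hz k, map_smul, map_smul, ih, Nat.factorial_succ]
        push_cast
        module
  intro m
  induction m with
  | zero =>
      intro x hx hxS k
      rw [pow_zero, Module.End.one_apply] at hx
      exact ⟨0, S.zero_mem, by rw [map_zero, ← hx]⟩
  | succ m ih =>
      intro x hx hxS k
      have hy : (a ^ m) (a x) = 0 := by
        rw [← Module.End.mul_apply, ← pow_succ]; exact hx
      obtain ⟨d, hdS, hd⟩ := ih (a x) hy (hSa x hxS) (k+1)
      set z := x - (a ^ k) d with hzdef
      have hzS : z ∈ S := S.sub_mem hxS (hpa k d hdS)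
      have hz : a z = 0 := by
        rw [hzdef, map_sub, ← Module.End.mul_apply, ← pow_succ', hd, sub_self]
      have hfac : (k.factorial : ℂ) * s ^ k ≠ 0 :=
        mul_ne_zero (Nat.cast_ne_zero.mpr (Nat.factorial_ne_zero k)) (pow_ne_zero k hs)
      refine ⟨((k.factorial : ℂ) * s ^ k)⁻¹ • (b ^ k) z + d,
        S.add_mem (S.smul_mem _ (hpb k z hzS)) hdS, ?_⟩
      rw [map_add, map_smul, hB z hz k, smul_smul, smul_smul, mul_assoc,
        inv_mul_cancel₀ hfac, one_smul, hzdef]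
      abel

/-- **Core of Lemma 2.3.2**: for a short exact sequence `0 → U → V → W → 0` of βγ-modules
with `V` smooth and the modes `β_j, γ_j` (`j > N`) acting locally nilpotently on `U`,
the induced sequence `0 → K_N(U) → K_N(V) → K_N(W) → 0` is exact. -/
theorem KN_exact (N : ℤ) (U V W : BGRep)
    (hU : U.IsRep) (hV : V.IsRep) (hW : W.IsRep)
    (ι : BGRep.Hom U V) (π : BGRep.Hom V W)
    (hinj : Function.Injective ι.toLin) (hsurj : Function.Surjective π.toLin)
    (hexact : LinearMap.range ι.toLin = LinearMap.ker π.toLin)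
    (hVsmooth : V.Smooth)
    (hnil : ∀ j : ℤ, N < j → ∀ u : U.carrier,
      ∃ m : ℕ, (U.B j ^ m) u = 0 ∧ (U.G j ^ m) u = 0) :
    (∀ u ∈ U.KN N, ι.toLin u ∈ V.KN N) ∧
    (∀ v ∈ V.KN N, π.toLin v ∈ W.KN N) ∧
    (∀ u₁ ∈ U.KN N, ∀ u₂ ∈ U.KN N, ι.toLin u₁ = ι.toLin u₂ → u₁ = u₂) ∧
    (∀ v ∈ V.KN N, π.toLin v = 0 → ∃ u ∈ U.KN N, ι.toLin u = v) ∧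
    (∀ w ∈ W.KN N, ∃ v ∈ V.KN N, π.toLin v = w) := by
  have memKN : ∀ (M : BGRep) (x : M.carrier),
      x ∈ M.KN N ↔ ∀ k : ℤ, N < k → M.B k x = 0 ∧ M.G k x = 0 := fun M x => Iff.rfl
  -- pointwise commutation relations in V
  have hBBv : ∀ (m n : ℤ) (x : V.carrier), V.B m (V.B n x) = V.B n (V.B m x) :=
    fun m n x => LinearMap.congr_fun (hV.1 m n) x
  have hGGv : ∀ (m n : ℤ) (x : V.carrier), V.G m (V.G n x) = V.G n (V.G m x) :=
    fun m n x => LinearMap.congr_fun (hV.2.1 m n) x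
  have hBGv : ∀ (m n : ℤ) (x : V.carrier),
      V.B m (V.G n x) = V.G n (V.B m x) + (if m = -n then -x else 0) := by
    intro m n x
    have h := LinearMap.congr_fun (hV.2.2 m n) x
    simp only [LinearMap.sub_apply, LinearMap.comp_apply] at h
    by_cases hc : m = -n
    · rw [if_pos hc] at h ⊢
      simp only [LinearMap.neg_apply, LinearMap.id_apply] at h
      exact sub_eq_iff_eq_add'.mp h
    · rw [if_neg hc] at h ⊢
      simp only [LinearMap.zero_apply] at h
      rw [add_zero]
      exact sub_eq_zero.mp h
  have hcommBG : ∀ (m n : ℤ) (x : V.carrier), m ≠ -n →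
      V.B m (V.G n x) = V.G n (V.B m x) := by
    intro m n x hmn
    rw [hBGv, if_neg hmn, add_zero]
  -- ι commutes with powers
  have hιB : ∀ (j : ℤ) (m : ℕ) (u : U.carrier),
      ι.toLin ((U.B j ^ m) u) = (V.B j ^ m) (ι.toLin u) := by
    intro j m
    induction m with
    | zero => intro u; simp
    | succ m ih =>
        intro u
        rw [pow_succ, Module.End.mul_apply, pow_succ, Module.End.mul_apply, ← ι.commB, ih]
  have hιG : ∀ (j : ℤ) (m : ℕ) (u : U.carrier),
      ι.toLin ((U.G j ^ m) u) = (V.G j ^ m) (ι.toLin u) := by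
    intro j m
    induction m with
    | zero => intro u; simp
    | succ m ih =>
        intro u
        rw [pow_succ, Module.End.mul_apply, pow_succ, Module.End.mul_apply, ← ι.commG, ih]
  -- triviality of KN when N < 0
  have trivW : N < 0 → ∀ w ∈ W.KN N, w = 0 := by
    intro hN w hw
    have h := LinearMap.congr_fun (hW.2.2 0 0) w
    rw [if_pos (show (0:ℤ) = -0 by omega)] at h
    simp only [LinearMap.sub_apply, LinearMap.comp_apply, LinearMap.neg_apply,
      LinearMap.id_apply] at h
    rw [(hw 0 hN).1, (hw 0 hN).2, map_zero, map_zero, sub_zero] at h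
    have := h.symm
    rw [neg_eq_zero] at this
    exact this
  -- the descent lemma
  have key : 0 ≤ N → ∀ n : ℕ, ∀ v : V.carrier, π.toLin v ∈ W.KN N →
      (∀ k : ℤ, N + (n : ℤ) < k → V.B k v = 0 ∧ V.G k v = 0) →
      ∃ v' ∈ V.KN N, π.toLin v' = π.toLin v := by
    intro hN n
    induction n with
    | zero =>
        intro v hπv hkill
        exact ⟨v, (memKN V v).mpr (fun k hk => hkill k (by omega)), rfl⟩
    | succ n ih =>
        intro v hπv hkill
        set K : ℤ := N + (n : ℤ) + 1 with hKdef
        have hn0 : (0:ℤ) ≤ (n : ℤ) := Int.natCast_nonneg n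
        have hK1 : 1 ≤ K := by omega
        have hNK : N < K := by omega
        have hkill' : ∀ k : ℤ, K < k → V.B k v = 0 ∧ V.G k v = 0 := by
          intro k hk; exact hkill k (by push_cast; omega)
        -- S₁ : vectors in ker π killed by all modes above K
        set S₁ : Submodule ℂ V.carrier :=
          LinearMap.ker π.toLin ⊓
            ⨅ (k : ℤ) (_ : K < k), (LinearMap.ker (V.B k) ⊓ LinearMap.ker (V.G k))
            with hS₁def
        have hS₁mem : ∀ y : V.carrier,
            y ∈ S₁ ↔ π.toLin y = 0 ∧ ∀ k : ℤ, K < k → V.B k y = 0 ∧ V.G k y = 0 := by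
          intro y
          simp [hS₁def, Submodule.mem_inf, Submodule.mem_iInf, LinearMap.mem_ker, forall_and]
        have hS₁a : ∀ y ∈ S₁, V.B K y ∈ S₁ := by
          intro y hy
          rw [hS₁mem] at hy ⊢
          obtain ⟨hy0, hy1⟩ := hy
          refine ⟨by rw [π.commB, hy0, map_zero], fun k hk => ⟨?_, ?_⟩⟩
          · rw [hBBv, (hy1 k hk).1, map_zero]
          · rw [← hcommBG K k y (by omega), (hy1 k hk).2, map_zero]
        have hS₁b : ∀ y ∈ S₁, V.G (-K) y ∈ S₁ := by
          intro y hy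
          rw [hS₁mem] at hy ⊢
          obtain ⟨hy0, hy1⟩ := hy
          refine ⟨by rw [π.commG, hy0, map_zero], fun k hk => ⟨?_, ?_⟩⟩
          · rw [hcommBG k (-K) y (by omega), (hy1 k hk).1, map_zero]
          · rw [hGGv, (hy1 k hk).2, map_zero]
        -- step 1 : kill β_K
        set x₁ : V.carrier := V.B K v with hx₁def
        have hπx₁ : π.toLin x₁ = 0 := by
          rw [hx₁def, π.commB, ((memKN W _).mp hπv K hNK).1]
        have hx₁S₁ : x₁ ∈ S₁ := by
          rw [hS₁mem]
          refine ⟨hπx₁, fun k hk => ⟨?_, ?_⟩⟩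
          · rw [hx₁def, hBBv, (hkill' k hk).1, map_zero]
          · rw [hx₁def, ← hcommBG K k v (by omega), (hkill' k hk).2, map_zero]
        obtain ⟨u₁, hu₁⟩ := (LinearMap.mem_range).mp (by rw [hexact]; exact hπx₁)
        obtain ⟨m₁, hm₁, -⟩ := hnil K hNK u₁
        have hx₁nil : (V.B K ^ m₁) x₁ = 0 := by
          rw [← hu₁, ← hιB, hm₁, map_zero]
        have hrel₁ : ∀ x : V.carrier,
            V.B K (V.G (-K) x) = V.G (-K) (V.B K x) + (-1 : ℂ) • x := by
          intro x
          rw [hBGv K (-K) x, if_pos (by omega), neg_one_smul]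
        obtain ⟨c₁, hc₁S, hc₁⟩ := pre_aux (V.B K) (V.G (-K)) (-1) (by norm_num) hrel₁
          S₁ hS₁a hS₁b m₁ (-x₁) (by rw [map_neg, hx₁nil, neg_zero]) (S₁.neg_mem hx₁S₁) 1
        rw [pow_one] at hc₁
        set v₁ : V.carrier := v + c₁ with hv₁def
        have hc₁S' := (hS₁mem c₁).mp hc₁S
        have hπv₁ : π.toLin v₁ = π.toLin v := by
          rw [hv₁def, map_add, hc₁S'.1, add_zero]
        have hBKv₁ : V.B K v₁ = 0 := by
          rw [hv₁def, map_add, hc₁, ← hx₁def, add_neg_cancel]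
        have hkill₁ : ∀ k : ℤ, K < k → V.B k v₁ = 0 ∧ V.G k v₁ = 0 := by
          intro k hk
          constructor
          · rw [hv₁def, map_add, (hkill' k hk).1, (hc₁S'.2 k hk).1, add_zero]
          · rw [hv₁def, map_add, (hkill' k hk).2, (hc₁S'.2 k hk).2, add_zero]
        -- S₂ : S₁ plus killed by β_K
        set S₂ : Submodule ℂ V.carrier := S₁ ⊓ LinearMap.ker (V.B K) with hS₂def
        have hS₂mem : ∀ y : V.carrier, y ∈ S₂ ↔ y ∈ S₁ ∧ V.B K y = 0 := by
          intro y
          simp [hS₂def, Submodule.mem_inf, LinearMap.mem_ker]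
        have hS₂a : ∀ y ∈ S₂, V.G K y ∈ S₂ := by
          intro y hy
          rw [hS₂mem] at hy ⊢
          obtain ⟨hy1, hy2⟩ := hy
          rw [hS₁mem] at hy1 ⊢
          obtain ⟨hy0, hy1⟩ := hy1
          refine ⟨⟨by rw [π.commG, hy0, map_zero], fun k hk => ⟨?_, ?_⟩⟩, ?_⟩
          · rw [hcommBG k K y (by omega), (hy1 k hk).1, map_zero]
          · rw [hGGv, (hy1 k hk).2, map_zero]
          · rw [hcommBG K K y (by omega), hy2, map_zero]
        have hS₂b : ∀ y ∈ S₂, V.B (-K) y ∈ S₂ := by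
          intro y hy
          rw [hS₂mem] at hy ⊢
          obtain ⟨hy1, hy2⟩ := hy
          rw [hS₁mem] at hy1 ⊢
          obtain ⟨hy0, hy1⟩ := hy1
          refine ⟨⟨by rw [π.commB, hy0, map_zero], fun k hk => ⟨?_, ?_⟩⟩, ?_⟩
          · rw [hBBv, (hy1 k hk).1, map_zero]
          · rw [← hcommBG (-K) k y (by omega), (hy1 k hk).2, map_zero]
          · rw [hBBv, hy2, map_zero]
        -- step 2 : kill γ_K
        set x₂ : V.carrier := V.G K v₁ with hx₂def
        have hπx₂ : π.toLin x₂ = 0 := by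
          rw [hx₂def, π.commG, hπv₁, ((memKN W _).mp hπv K hNK).2]
        have hx₂S₂ : x₂ ∈ S₂ := by
          rw [hS₂mem, hS₁mem]
          refine ⟨⟨hπx₂, fun k hk => ⟨?_, ?_⟩⟩, ?_⟩
          · rw [hx₂def, hcommBG k K v₁ (by omega), (hkill₁ k hk).1, map_zero]
          · rw [hx₂def, hGGv, (hkill₁ k hk).2, map_zero]
          · rw [hx₂def, hcommBG K K v₁ (by omega), hBKv₁, map_zero]
        obtain ⟨u₂, hu₂⟩ := (LinearMap.mem_range).mp (by rw [hexact]; exact hπx₂)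
        obtain ⟨m₂, -, hm₂⟩ := hnil K hNK u₂
        have hx₂nil : (V.G K ^ m₂) x₂ = 0 := by
          rw [← hu₂, ← hιG, hm₂, map_zero]
        have hrel₂ : ∀ x : V.carrier,
            V.G K (V.B (-K) x) = V.B (-K) (V.G K x) + (1 : ℂ) • x := by
          intro x
          have h' := hBGv (-K) K x
          rw [if_pos rfl] at h'
          rw [h', one_smul]
          abel
        obtain ⟨c₂, hc₂S, hc₂⟩ := pre_aux (V.G K) (V.B (-K)) 1 (by norm_num) hrel₂
          S₂ hS₂a hS₂b m₂ (-x₂) (by rw [map_neg, hx₂nil, neg_zero]) (S₂.neg_mem hx₂S₂) 1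
        rw [pow_one] at hc₂
        set v₂ : V.carrier := v₁ + c₂ with hv₂def
        obtain ⟨hc₂S₁, hc₂BK⟩ := (hS₂mem c₂).mp hc₂S
        have hc₂S' := (hS₁mem c₂).mp hc₂S₁
        have hπv₂ : π.toLin v₂ = π.toLin v := by
          rw [hv₂def, map_add, hc₂S'.1, add_zero, hπv₁]
        have hkill₂ : ∀ k : ℤ, N + (n : ℤ) < k → V.B k v₂ = 0 ∧ V.G k v₂ = 0 := by
          intro k hk
          rcases eq_or_lt_of_le (show K ≤ k by omega) with hKk | hKk
          · subst hKk
            constructor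
            · rw [hv₂def, map_add, hBKv₁, hc₂BK, add_zero]
            · rw [hv₂def, map_add, ← hx₂def, hc₂, add_neg_cancel]
          · constructor
            · rw [hv₂def, map_add, (hkill₁ k hKk).1, (hc₂S'.2 k hKk).1, add_zero]
            · rw [hv₂def, map_add, (hkill₁ k hKk).2, (hc₂S'.2 k hKk).2, add_zero]
        obtain ⟨v', hv'KN, hv'π⟩ := ih v₂ (by rw [hπv₂]; exact hπv) hkill₂
        exact ⟨v', hv'KN, by rw [hv'π, hπv₂]⟩
  refine ⟨?_, ?_, ?_, ?_, ?_⟩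
  · intro u hu k hk
    exact ⟨by rw [← ι.commB, (hu k hk).1, map_zero],
           by rw [← ι.commG, (hu k hk).2, map_zero]⟩
  · intro v hv k hk
    exact ⟨by rw [← π.commB, (hv k hk).1, map_zero],
           by rw [← π.commG, (hv k hk).2, map_zero]⟩
  · intro u₁ _ u₂ _ h
    exact hinj h
  · intro v hv hπv
    obtain ⟨u, hu⟩ := (LinearMap.mem_range).mp (by rw [hexact]; exact hπv)
    refine ⟨u, fun k hk => ⟨?_, ?_⟩, hu⟩
    · apply hinj
      rw [map_zero, ι.commB, hu]
      exact (hv k hk).1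
    · apply hinj
      rw [map_zero, ι.commG, hu]
      exact (hv k hk).2
  · intro w hw
    by_cases hN : 0 ≤ N
    · obtain ⟨v₀, hv₀⟩ := hsurj w
      obtain ⟨Kv, hKv⟩ := hVsmooth v₀
      have hb := Int.self_le_toNat (Kv - N)
      obtain ⟨v', hv'KN, hπ⟩ := key hN (Kv - N).toNat v₀
        (by rw [hv₀]; exact hw)
        (fun k hk => hKv k (by omega))
      exact ⟨v', hv'KN, by rw [hπ, hv₀]⟩
    · have hw0 : w = 0 := trivW (by omega) w hw
      exact ⟨0, Submodule.zero_mem _, by rw [map_zero, hw0]⟩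

end
end

section
/- Let V = ⊕_{n∈ℤ} V_n be a finite-dimensional complex vector space graded by ℤ with only finitely many nonzero summands. Let σ, τ ∈ End(V) satisfy σ(V_n) ⊆ V_{n+1}, τ(V_n) ⊆ V_{n−1}, and σ² = τ² = 0. Set L = στ + τσ, let D ∈ End(V) act on V_n as multiplication by 2n, set H = D + L, K = exp(πiH/2), f(L) = Σ_{j≥0} c_j·L^j with c_j = −(−πi)^{j+1}/(j+1)! (the Taylor coefficients of (1−e^{−πix})/x; the series converges in End(V)), E = σ, and F = (1/(2i))·τ·f(L)·K. Then: K is invertible with inverse exp(−πiH/2); K·E = −E·K and K·F = −F·K; H·E − E·H = 2E and H·F − F·H = −2F; E·F − F·E = (K − K⁻¹)/(2i); and E² = F² = 0. In other words these operators satisfy the defining relations of the unrolled restricted quantum group of sl(2) at q = i, with K = q^H. (Lemma 5.2.1 of the paper.) -/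
open Complex

/-- The Taylor coefficients of the entire function `(1 - e^{-πix})/x`. -/
noncomputable def cCoeff (j : ℕ) : ℂ :=
  -(-(Real.pi : ℂ) * I) ^ (j + 1) / (Nat.factorial (j + 1))

section Aux

variable {𝔸 : Type*} [NormedRing 𝔸] [NormedAlgebra ℂ 𝔸] [CompleteSpace 𝔸]

lemma exp_add_of_commute_ℂ {x y : 𝔸} (hxy : Commute x y) :
    NormedSpace.exp (x + y) = NormedSpace.exp x * NormedSpace.exp y :=
  NormedSpace.exp_add_of_commute_of_mem_ball (𝕂 := ℂ) hxy
    (by simp [NormedSpace.expSeries_radius_eq_top]) (by simp [NormedSpace.expSeries_radius_eq_top])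

lemma norm_cCoeff (j : ℕ) : ‖cCoeff j‖ = Real.pi ^ (j + 1) / (Nat.factorial (j + 1)) := by
  simp [cCoeff, norm_div, norm_pow, norm_neg, Complex.norm_real,
    _root_.abs_of_nonneg Real.pi_pos.le]

lemma cCoeff_summable (Y : 𝔸) : Summable (fun j : ℕ => cCoeff j • Y ^ j) := by
  rw [← summable_nat_add_iff 1]
  apply Summable.of_norm_bounded
    (g := fun j : ℕ => Real.pi * ((Real.pi * ‖Y‖) ^ (j + 1) / (Nat.factorial (j + 1))))
  · have h := Real.summable_pow_div_factorial (Real.pi * ‖Y‖)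
    exact ((summable_nat_add_iff 1).mpr h).mul_left _
  · intro j
    rw [norm_smul, norm_cCoeff]
    have h1 : ‖Y ^ (j + 1)‖ ≤ ‖Y‖ ^ (j + 1) := norm_pow_le' Y (Nat.succ_pos j)
    have h2 : Real.pi ^ (j + 1 + 1) / (Nat.factorial (j + 1 + 1)) ≤
        Real.pi ^ (j + 1 + 1) / (Nat.factorial (j + 1)) := by
      apply div_le_div_of_nonneg_left (by positivity) (by positivity)
      exact_mod_cast Nat.factorial_le (Nat.le_succ _)
    calc Real.pi ^ (j + 1 + 1) / (Nat.factorial (j + 1 + 1)) * ‖Y ^ (j + 1)‖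
        ≤ Real.pi ^ (j + 1 + 1) / (Nat.factorial (j + 1)) * ‖Y‖ ^ (j + 1) := by
          apply mul_le_mul h2 h1 (norm_nonneg _) (by positivity)
      _ = Real.pi * ((Real.pi * ‖Y‖) ^ (j + 1) / (Nat.factorial (j + 1))) := by
          rw [mul_pow]; ring

/-- If `A B = B (A + c)` then `e^A B = e^c B e^A`. -/
lemma exp_conj_of_semiconj (A B : 𝔸) (c : ℂ) (h : A * B = B * (A + c • 1)) :
    NormedSpace.exp A * B = Complex.exp c • (B * NormedSpace.exp A) := by
  have hpow : ∀ n : ℕ, A ^ n * B = B * (A + c • 1) ^ n := by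
    intro n; induction n with
    | zero => simp
    | succ n ih =>
        rw [pow_succ, pow_succ, mul_assoc, h, ← mul_assoc, ih, mul_assoc]
  have hcomm : Commute (c • (1:𝔸)) A := by
    unfold Commute SemiconjBy
    rw [smul_mul_assoc, one_mul, mul_smul_comm, mul_one]
  calc NormedSpace.exp A * B
      = (∑' n : ℕ, ((n.factorial :ℂ))⁻¹ • A ^ n) * B := by
        rw [NormedSpace.exp_eq_tsum ℂ]
    _ = ∑' n : ℕ, (((n.factorial :ℂ))⁻¹ • A ^ n) * B :=
        ((NormedSpace.expSeries_summable' (𝕂 := ℂ) A).tsum_mul_right B).symm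
    _ = ∑' n : ℕ, B * (((n.factorial :ℂ))⁻¹ • (A + c • 1) ^ n) := by
        congr 1; funext n
        rw [smul_mul_assoc, hpow n, mul_smul_comm]
    _ = B * ∑' n : ℕ, ((n.factorial :ℂ))⁻¹ • (A + c • 1) ^ n :=
        (NormedSpace.expSeries_summable' (𝕂 := ℂ) (A + c • 1)).tsum_mul_left B
    _ = B * NormedSpace.exp (A + c • 1) := by rw [NormedSpace.exp_eq_tsum ℂ]
    _ = B * (NormedSpace.exp (c • 1) * NormedSpace.exp A) := by
        rw [add_comm A, exp_add_of_commute_ℂ hcomm]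
    _ = Complex.exp c • (B * NormedSpace.exp A) := by
        have h1 : NormedSpace.exp (c • (1:𝔸)) = Complex.exp c • 1 := by
          rw [← Algebra.algebraMap_eq_smul_one, ← NormedSpace.algebraMap_exp_comm,
            Complex.exp_eq_exp_ℂ, Algebra.algebraMap_eq_smul_one]
        rw [h1, smul_mul_assoc, one_mul, mul_smul_comm]

lemma commute_tsum_cCoeff (X Y : 𝔸) (h : Commute X Y) :
    Commute X (∑' j : ℕ, cCoeff j • Y ^ j) := by
  unfold Commute SemiconjBy
  rw [← (cCoeff_summable Y).tsum_mul_left X, ← (cCoeff_summable Y).tsum_mul_right X]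
  congr 1; funext j
  rw [mul_smul_comm, smul_mul_assoc, (h.pow_right j).eq]

/-- `Y · f(Y) = 1 - e^{-πi Y}`. -/
lemma mul_tsum_cCoeff (Y : 𝔸) :
    Y * (∑' j : ℕ, cCoeff j • Y ^ j) = 1 - NormedSpace.exp ((-(Real.pi : ℂ) * I) • Y) := by
  have hsum : Summable (fun n : ℕ => ((n.factorial :ℂ))⁻¹ • ((-(Real.pi : ℂ) * I) • Y) ^ n) :=
    NormedSpace.expSeries_summable' (𝕂 := ℂ) _
  have hterm : ∀ j : ℕ, ((((j+1).factorial :ℂ))⁻¹ • ((-(Real.pi : ℂ) * I) • Y) ^ (j+1))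
      = (-(cCoeff j)) • Y ^ (j + 1) := by
    intro j
    rw [smul_pow, smul_smul]
    congr 1
    rw [cCoeff, neg_div, neg_neg, div_eq_mul_inv, mul_comm]
  have hexp : NormedSpace.exp ((-(Real.pi : ℂ) * I) • Y)
      = 1 + ∑' j : ℕ, (-(cCoeff j)) • Y ^ (j + 1) := by
    have e1 : NormedSpace.exp ((-(Real.pi : ℂ) * I) • Y)
        = ∑' n : ℕ, ((n.factorial :ℂ))⁻¹ • ((-(Real.pi : ℂ) * I) • Y) ^ n :=
      congrFun (NormedSpace.exp_eq_tsum ℂ) _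
    rw [e1, Summable.tsum_eq_zero_add hsum]
    congr 1
    · simp
    · congr 1; funext j; exact hterm j
  rw [hexp]
  rw [← (cCoeff_summable Y).tsum_mul_left Y]
  rw [← neg_neg (∑' j : ℕ, (-(cCoeff j)) • Y ^ (j+1)), ← tsum_neg]
  have h3 : ∀ j : ℕ, Y * (cCoeff j • Y ^ j) = -((-(cCoeff j)) • Y ^ (j+1)) := by
    intro j
    rw [neg_smul, neg_neg, mul_smul_comm, pow_succ']
  simp only [h3]
  abel

/-- eigenvector lemma : if `A v = lam • v` then `exp A v = e^lam • v`. -/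
lemma exp_apply_eigenvector {V : Type*} [NormedAddCommGroup V] [NormedSpace ℂ V]
    [CompleteSpace V] (A : V →L[ℂ] V) (v : V) (lam : ℂ) (h : A v = lam • v) :
    NormedSpace.exp A v = Complex.exp lam • v := by
  have hpow : ∀ n : ℕ, (A ^ n) v = lam ^ n • v := by
    intro n; induction n with
    | zero => simp
    | succ n ih =>
        rw [pow_succ, ContinuousLinearMap.mul_apply, h, map_smul, ih, smul_smul, mul_comm,
          ← pow_succ]
  have e1 : NormedSpace.exp A = ∑' n : ℕ, ((n.factorial :ℂ))⁻¹ • A ^ n :=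
    congrFun (NormedSpace.exp_eq_tsum ℂ) _
  have e2 : NormedSpace.exp A v
      = ∑' n : ℕ, (((n.factorial :ℂ))⁻¹ • A ^ n) v := by
    rw [e1]
    exact (ContinuousLinearMap.apply ℂ V v).map_tsum
      (NormedSpace.expSeries_summable' (𝕂 := ℂ) A)
  rw [e2]
  have e3 : ∀ n : ℕ, (((n.factorial :ℂ))⁻¹ • A ^ n) v
      = (((n.factorial :ℂ))⁻¹ • lam ^ n) • v := by
    intro n
    rw [ContinuousLinearMap.smul_apply, hpow n, smul_smul, smul_eq_mul]
  simp only [e3]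
  rw [Summable.tsum_smul_const (NormedSpace.expSeries_summable' (𝕂 := ℂ) lam)]
  congr 1
  rw [Complex.exp_eq_exp_ℂ]
  exact (congrFun (NormedSpace.exp_eq_tsum ℂ) lam).symm

end Aux
/-- **Lemma 5.2.1**: a finite-dimensional `ℤ`-graded module over the quiver algebra `Λ`
(operators `σ`, `τ` with `σ(V_n) ⊆ V_{n+1}`, `τ(V_n) ⊆ V_{n-1}`, `σ² = τ² = 0`) carries an
action of the unrolled restricted quantum group `U̅_q^H(sl(2))` at `q = i` via
`H = D + L`, `K = e^{πiH/2}`, `E = σ`, `F = (2i)⁻¹ τ f(L) K`, where `L = στ + τσ`,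
`D` acts on `V_n` by `2n`, and `f` is the Taylor series of `(1-e^{-πix})/x`. -/
theorem quiver_quantum_group_relations
    (V : Type*) [NormedAddCommGroup V] [NormedSpace ℂ V] [FiniteDimensional ℂ V]
    (Vn : ℤ → Submodule ℂ V) (hinternal : DirectSum.IsInternal Vn)
    (hfin : ∃ S : Finset ℤ, ∀ n : ℤ, n ∉ S → Vn n = ⊥)
    (σ τ D : V →L[ℂ] V)
    (hσ : ∀ (n : ℤ), ∀ v ∈ Vn n, σ v ∈ Vn (n + 1))
    (hτ : ∀ (n : ℤ), ∀ v ∈ Vn n, τ v ∈ Vn (n - 1))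
    (hσsq : σ * σ = 0) (hτsq : τ * τ = 0)
    (hD : ∀ (n : ℤ), ∀ v ∈ Vn n, D v = ((2 * n : ℤ) : ℂ) • v) :
    let L := σ * τ + τ * σ
    let H := D + L
    let K := NormedSpace.exp (((Real.pi : ℂ) * I / 2) • H)
    let Kinv := NormedSpace.exp ((-((Real.pi : ℂ) * I) / 2) • H)
    let fL := ∑' j : ℕ, cCoeff j • L ^ j
    let E := σ
    let F := (2 * I)⁻¹ • (τ * fL * K)
    (K * Kinv = 1 ∧ Kinv * K = 1) ∧
    K * E = -(E * K) ∧ K * F = -(F * K) ∧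
    H * E - E * H = (2 : ℂ) • E ∧ H * F - F * H = (-2 : ℂ) • F ∧
    E * F - F * E = (2 * I)⁻¹ • (K - Kinv) ∧
    E * E = 0 ∧ F * F = 0 := by
  intro L H K Kinv fL E F
  haveI : CompleteSpace V := FiniteDimensional.complete ℂ V
  have hLdef : L = σ * τ + τ * σ := rfl
  have hHdef : H = D + L := rfl
  have hKdef : K = NormedSpace.exp (((Real.pi : ℂ) * I / 2) • H) := rfl
  have hKinvdef : Kinv = NormedSpace.exp ((-((Real.pi : ℂ) * I) / 2) • H) := rfl
  have hfLdef : fL = ∑' j : ℕ, cCoeff j • L ^ j := rfl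
  have hEdef : E = σ := rfl
  have hFdef : F = (2 * I)⁻¹ • (τ * fL * K) := rfl
  clear_value F E fL Kinv K H L
  -- extensionality over the internal direct sum
  have hext : ∀ (A B : V →L[ℂ] V), (∀ n : ℤ, ∀ v ∈ Vn n, A v = B v) → A = B := by
    intro A B hAB
    ext v
    have hv : v ∈ ⨆ n, Vn n := by
      rw [hinternal.submodule_iSup_eq_top]; trivial
    refine Submodule.iSup_induction (motive := fun x => A x = B x) Vn hv hAB (by simp) ?_
    intro x y hx hy
    rw [map_add, map_add, hx, hy]
  -- basic commutation relations
  have hLσ : L * σ = σ * L := by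
    rw [hLdef, add_mul, mul_add, mul_assoc τ σ σ, hσsq, ← mul_assoc σ σ τ, hσsq]
    simp [mul_assoc]
  have hLτ : L * τ = τ * L := by
    rw [hLdef, add_mul, mul_add, mul_assoc σ τ τ, hτsq, ← mul_assoc τ τ σ, hτsq]
    simp [mul_assoc]
  have hDσ : D * σ = σ * D + (2:ℂ) • σ := by
    apply hext; intro n v hv
    simp only [ContinuousLinearMap.add_apply, ContinuousLinearMap.mul_apply,
      ContinuousLinearMap.smul_apply]
    rw [hD (n+1) (σ v) (hσ n v hv), hD n v hv, map_smul, ← add_smul]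
    congr 1; push_cast; ring
  have hDτ : D * τ = τ * D - (2:ℂ) • τ := by
    apply hext; intro n v hv
    simp only [ContinuousLinearMap.sub_apply, ContinuousLinearMap.mul_apply,
      ContinuousLinearMap.smul_apply]
    rw [hD (n-1) (τ v) (hτ n v hv), hD n v hv, map_smul, ← sub_smul]
    congr 1; push_cast; ring
  have hDL : D * L = L * D := by
    apply hext; intro n v hv
    have hστ : (σ * τ) v ∈ Vn n := by
      have h := hσ (n-1) (τ v) (hτ n v hv)
      rw [sub_add_cancel] at h
      exact h
    have hτσ : (τ * σ) v ∈ Vn n := by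
      have h := hτ (n+1) (σ v) (hσ n v hv)
      rw [add_sub_cancel_right] at h
      exact h
    have hLv : L v ∈ Vn n := by
      rw [hLdef]
      exact Submodule.add_mem _ hστ hτσ
    simp only [ContinuousLinearMap.mul_apply]
    rw [hD n (L v) hLv, hD n v hv, map_smul]
  have hHσ : H * σ = σ * H + (2:ℂ) • σ := by
    rw [hHdef, add_mul, mul_add, hDσ, hLσ]
    module
  have hHτ : H * τ = τ * H - (2:ℂ) • τ := by
    rw [hHdef, add_mul, mul_add, hDτ, hLτ]
    module
  have hHL : H * L = L * H := by
    rw [hHdef, add_mul, hDL, ← mul_add]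
  -- commutation with fL
  have hτfL : τ * fL = fL * τ := by
    rw [hfLdef]
    exact (commute_tsum_cCoeff τ L hLτ.symm).eq
  have hσfL : σ * fL = fL * σ := by
    rw [hfLdef]
    exact (commute_tsum_cCoeff σ L hLσ.symm).eq
  have hHfL : H * fL = fL * H := by
    rw [hfLdef]
    exact (commute_tsum_cCoeff H L hHL).eq
  -- exponential conjugation
  have hconjσ : (((Real.pi : ℂ) * I / 2) • H) * σ
      = σ * ((((Real.pi : ℂ) * I / 2) • H) + ((Real.pi : ℂ) * I) • 1) := by
    rw [smul_mul_assoc, hHσ, mul_add, mul_smul_comm, mul_smul_comm, mul_one]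
    module
  have hconjτ : (((Real.pi : ℂ) * I / 2) • H) * τ
      = τ * ((((Real.pi : ℂ) * I / 2) • H) + (-((Real.pi : ℂ) * I)) • 1) := by
    rw [smul_mul_assoc, hHτ, mul_add, mul_smul_comm, mul_smul_comm, mul_one]
    module
  have hKσ : K * σ = -(σ * K) := by
    rw [hKdef, exp_conj_of_semiconj _ _ _ hconjσ, Complex.exp_pi_mul_I, neg_one_smul]
  have hKτ : K * τ = -(τ * K) := by
    rw [hKdef, exp_conj_of_semiconj _ _ _ hconjτ, Complex.exp_neg, Complex.exp_pi_mul_I]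
    have h9 : ((-1:ℂ))⁻¹ = -1 := by norm_num
    rw [h9, neg_one_smul]
  have hKL : K * L = L * K := by
    rw [hKdef]
    exact ((Commute.smul_left (hHL : Commute H L) (((Real.pi : ℂ) * I / 2))).exp_left
      ).eq
  have hKfL : K * fL = fL * K := by
    rw [hfLdef]
    exact (commute_tsum_cCoeff K L hKL).eq
  have hHK : H * K = K * H := by
    rw [hKdef]
    exact (((Commute.refl H).smul_right (((Real.pi : ℂ) * I / 2))).exp_right).eq
  -- K * Kinv = 1
  have hsmulneg : (-((Real.pi : ℂ) * I) / 2) • H = -((((Real.pi : ℂ) * I / 2)) • H) := by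
    rw [neg_div, neg_smul]
  have hKKinv : K * Kinv = 1 := by
    rw [hKdef, hKinvdef, hsmulneg,
      ← exp_add_of_commute_ℂ (Commute.refl ((((Real.pi : ℂ) * I / 2)) • H)).neg_right,
      add_neg_cancel, NormedSpace.exp_zero]
  have hKinvK : Kinv * K = 1 := by
    rw [hKdef, hKinvdef, hsmulneg,
      ← exp_add_of_commute_ℂ (Commute.refl ((((Real.pi : ℂ) * I / 2)) • H)).neg_left,
      neg_add_cancel, NormedSpace.exp_zero]
  -- spectral fact : exp(πi D) = 1
  have hexpD : NormedSpace.exp (((Real.pi : ℂ) * I) • D) = 1 := by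
    apply hext; intro n v hv
    have hDv : (((Real.pi : ℂ) * I) • D) v = ((n : ℂ) * (2 * (Real.pi : ℂ) * I)) • v := by
      rw [ContinuousLinearMap.smul_apply, hD n v hv, smul_smul]
      congr 1
      push_cast
      ring
    rw [exp_apply_eigenvector _ v _ hDv, Complex.exp_int_mul_two_pi_mul_I,
      ContinuousLinearMap.one_apply, one_smul]
  -- splitting of K and Kinv
  have hcommLD : Commute ((((Real.pi : ℂ) * I / 2)) • L) ((((Real.pi : ℂ) * I / 2)) • D) :=
    Commute.smul_right (Commute.smul_left (hDL.symm : Commute L D) _) _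
  have hKsplit : K = NormedSpace.exp ((((Real.pi : ℂ) * I / 2)) • L) *
      NormedSpace.exp ((((Real.pi : ℂ) * I / 2)) • D) := by
    have h1 : (((Real.pi : ℂ) * I / 2)) • H
        = (((Real.pi : ℂ) * I / 2)) • L + (((Real.pi : ℂ) * I / 2)) • D := by
      rw [hHdef]; module
    rw [hKdef, h1, exp_add_of_commute_ℂ hcommLD]
  have hKinvsplit : Kinv = NormedSpace.exp (-((((Real.pi : ℂ) * I / 2)) • L)) *
      NormedSpace.exp (-((((Real.pi : ℂ) * I / 2)) • D)) := by
    have h1 : ((-((Real.pi : ℂ) * I) / 2)) • H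
        = -((((Real.pi : ℂ) * I / 2)) • L) + -((((Real.pi : ℂ) * I / 2)) • D) := by
      rw [hHdef]; module
    rw [hKinvdef, h1, exp_add_of_commute_ℂ hcommLD.neg_left.neg_right]
  have hexpDsym : NormedSpace.exp ((((Real.pi : ℂ) * I / 2)) • D)
      = NormedSpace.exp (-((((Real.pi : ℂ) * I / 2)) • D)) := by
    have hu : NormedSpace.exp ((((Real.pi : ℂ) * I / 2)) • D) *
        NormedSpace.exp ((((Real.pi : ℂ) * I / 2)) • D) = 1 := by
      rw [← exp_add_of_commute_ℂ (Commute.refl ((((Real.pi : ℂ) * I / 2)) • D))]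
      have h2 : (((Real.pi : ℂ) * I / 2)) • D + (((Real.pi : ℂ) * I / 2)) • D
          = ((Real.pi : ℂ) * I) • D := by module
      rw [h2, hexpD]
    have hinv : NormedSpace.exp (-((((Real.pi : ℂ) * I / 2)) • D)) *
        NormedSpace.exp ((((Real.pi : ℂ) * I / 2)) • D) = 1 := by
      rw [← exp_add_of_commute_ℂ
        (Commute.refl ((((Real.pi : ℂ) * I / 2)) • D)).neg_left,
        neg_add_cancel, NormedSpace.exp_zero]
    calc NormedSpace.exp ((((Real.pi : ℂ) * I / 2)) • D)
        = (NormedSpace.exp (-((((Real.pi : ℂ) * I / 2)) • D)) *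
            NormedSpace.exp ((((Real.pi : ℂ) * I / 2)) • D)) *
            NormedSpace.exp ((((Real.pi : ℂ) * I / 2)) • D) := by
          rw [hinv, one_mul]
      _ = NormedSpace.exp (-((((Real.pi : ℂ) * I / 2)) • D)) *
            (NormedSpace.exp ((((Real.pi : ℂ) * I / 2)) • D) *
             NormedSpace.exp ((((Real.pi : ℂ) * I / 2)) • D)) := by
          rw [mul_assoc]
      _ = NormedSpace.exp (-((((Real.pi : ℂ) * I / 2)) • D)) := by
          rw [hu, mul_one]
  have hexpbK : NormedSpace.exp ((-(Real.pi : ℂ) * I) • L) * K = Kinv := by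
    rw [hKsplit, ← mul_assoc, ← exp_add_of_commute_ℂ
      (Commute.smul_right (Commute.smul_left (Commute.refl L) ((-(Real.pi : ℂ) * I)))
        (((Real.pi : ℂ) * I / 2)))]
    have h3 : (-(Real.pi : ℂ) * I) • L + (((Real.pi : ℂ) * I / 2)) • L
        = -((((Real.pi : ℂ) * I / 2)) • L) := by module
    rw [h3, hexpDsym, ← hKinvsplit]
  have hLfLK : L * fL * K = K - Kinv := by
    rw [hfLdef, mul_tsum_cCoeff L, sub_mul, one_mul, hexpbK]
  -- now the eight statements
  refine ⟨⟨hKKinv, hKinvK⟩, ?_, ?_, ?_, ?_, ?_, ?_, ?_⟩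
  · rw [hEdef]; exact hKσ
  · -- K * F = -(F * K)
    rw [hFdef, mul_smul_comm, smul_mul_assoc, ← smul_neg]
    congr 1
    calc K * (τ * fL * K) = (K * τ) * (fL * K) := by noncomm_ring
      _ = -(τ * K) * (fL * K) := by rw [hKτ]
      _ = -(τ * (K * fL) * K) := by noncomm_ring
      _ = -(τ * (fL * K) * K) := by rw [hKfL]
      _ = -(τ * fL * K * K) := by noncomm_ring
  · -- H * E - E * H = 2 • E
    rw [hEdef, hHσ]
    module
  · -- H * F - F * H = -2 • F
    rw [hFdef, mul_smul_comm, smul_mul_assoc, ← smul_sub, smul_comm ((-2 : ℂ))]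
    congr 1
    have c1 : H * (τ * fL * K) = (τ * H) * (fL * K) - ((2:ℂ) • τ) * (fL * K) := by
      rw [← sub_mul, ← hHτ]
      noncomm_ring
    have c2 : (τ * H) * (fL * K) = τ * fL * K * H := by
      calc (τ * H) * (fL * K) = τ * (H * fL) * K := by noncomm_ring
        _ = τ * (fL * H) * K := by rw [hHfL]
        _ = (τ * fL) * (H * K) := by noncomm_ring
        _ = (τ * fL) * (K * H) := by rw [hHK]
        _ = τ * fL * K * H := by noncomm_ring
    have c3 : ((2:ℂ) • τ) * (fL * K) = (2:ℂ) • (τ * fL * K) := by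
      rw [smul_mul_assoc, mul_assoc]
    rw [c1, c2, c3]
    module
  · -- E * F - F * E
    rw [hEdef, hFdef, mul_smul_comm, smul_mul_assoc, ← smul_sub]
    congr 1
    have h6 : τ * fL * K * σ = -(τ * σ * (fL * K)) := by
      calc τ * fL * K * σ = (τ * fL) * (K * σ) := by noncomm_ring
        _ = (τ * fL) * (-(σ * K)) := by rw [hKσ]
        _ = -(τ * (fL * σ) * K) := by noncomm_ring
        _ = -(τ * (σ * fL) * K) := by rw [← hσfL]
        _ = -(τ * σ * (fL * K)) := by noncomm_ring
    rw [h6, sub_neg_eq_add, ← hLfLK]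
    calc σ * (τ * fL * K) + τ * σ * (fL * K) = (σ * τ + τ * σ) * (fL * K) := by noncomm_ring
      _ = L * fL * K := by rw [← hLdef, mul_assoc]
  · rw [hEdef]; exact hσsq
  · -- F * F = 0
    rw [hFdef, smul_mul_assoc, mul_smul_comm]
    have e1 : K * (τ * fL * K) = -(τ * fL * (K * K)) := by
      calc K * (τ * fL * K) = (K * τ) * (fL * K) := by noncomm_ring
        _ = -(τ * K) * (fL * K) := by rw [hKτ]
        _ = -(τ * (K * fL) * K) := by noncomm_ring
        _ = -(τ * (fL * K) * K) := by rw [hKfL]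
        _ = -(τ * fL * (K * K)) := by noncomm_ring
    have e2 : τ * fL * τ = 0 := by
      rw [mul_assoc, ← hτfL, ← mul_assoc, hτsq, zero_mul]
    have h7 : (τ * fL * K) * (τ * fL * K) = 0 := by
      calc (τ * fL * K) * (τ * fL * K) = (τ * fL) * (K * (τ * fL * K)) := by noncomm_ring
        _ = (τ * fL) * (-(τ * fL * (K * K))) := by rw [e1]
        _ = -((τ * fL * τ) * (fL * (K * K))) := by noncomm_ring
        _ = 0 := by rw [e2, zero_mul, neg_zero]
    rw [h7, smul_zero, smul_zero]
end

section
/- Let A be the quotient of the free noncommutative ℂ-algebra on two generators ψ⁺, ψ⁻ by the two-sided ideal generated by (ψ⁺)² and (ψ⁻)², and let ℂ denote the one-dimensional left A-module on which ψ⁺ and ψ⁻ act by 0. Then Ext⁰_A(ℂ, ℂ) is a one-dimensional ℂ-vector space, and for every n ≥ 1, Ext^n_A(ℂ, ℂ) is a two-dimensional ℂ-vector space. (This is the Koszul-duality computation Ext•_A(ℂ,ℂ) ≅ A^! = ℂ[x,y]/(xy) used in the proof of Proposition 5.1.1 of the paper, where A is the enveloping algebra of the odd part of gl(1|1).) -/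
noncomputable section

open CategoryTheory

/-- The relations `(ψ⁺)² = (ψ⁻)² = 0` on the free algebra on two generators
(the generators are indexed by `Bool`: `true ↔ ψ⁺`, `false ↔ ψ⁻`). -/
inductive ARel : FreeAlgebra ℂ Bool → FreeAlgebra ℂ Bool → Prop
  | sq (b : Bool) : ARel (FreeAlgebra.ι ℂ b * FreeAlgebra.ι ℂ b) 0

/-- The algebra `A = ℂ⟨ψ⁺,ψ⁻⟩/((ψ⁺)², (ψ⁻)²)`. -/
abbrev AAlg : Type := RingQuot ARel

/-- The augmentation `A → ℂ`, killing `ψ⁺` and `ψ⁻`. -/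
def Aaug : AAlg →ₐ[ℂ] ℂ :=
  RingQuot.liftAlgHom ℂ ⟨FreeAlgebra.lift ℂ (fun _ => (0 : ℂ)), by
    rintro a b ⟨c⟩
    simp⟩

/-- The one-dimensional trivial `A`-module `ℂ`. -/
instance : Module AAlg ℂ := Module.compHom ℂ Aaug.toRingHom

/-- The trivial module as an object of the category of `A`-modules. -/
def Ctriv : ModuleCat AAlg := ModuleCat.of AAlg ℂ


namespace KoszulAux

/-- Encoding of alternating words: `none` is the empty word, `some (b, n)` is the
alternating word of length `n+1` starting with letter `b`. -/
abbrev W : Type := Option (Bool × ℕ)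

/-- The vector space with basis the alternating words. -/
abbrev V : Type := W →₀ ℂ

/-- The last letter of the alternating word starting with `b` of length `n+1`. -/
def lst (b : Bool) (n : ℕ) : Bool := if n % 2 = 0 then b else !b

lemma lst_succ (b : Bool) (n : ℕ) : lst b (n + 1) = !(lst b n) := by
  rcases Nat.even_or_odd n with h | h
  · have h0 : n % 2 = 0 := Nat.even_iff.mp h
    have h1 : (n+1) % 2 = 1 := by omega
    simp [lst, h0, h1]
  · have h0 : n % 2 = 1 := Nat.odd_iff.mp h
    have h1 : (n+1) % 2 = 0 := by omega
    simp [lst, h0, h1]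

open Finsupp in
/-- Prepending the letter `c`. -/
def Lmap (c : Bool) : V →ₗ[ℂ] V :=
  Finsupp.lsum ℂ fun w => match w with
    | Option.none => Finsupp.lsingle (some (c, 0))
    | Option.some (b, n) => if b = c then 0 else Finsupp.lsingle (some (c, n+1))

/-- Appending the letter `c`. -/
def Rmap (c : Bool) : V →ₗ[ℂ] V :=
  Finsupp.lsum ℂ fun w => match w with
    | Option.none => Finsupp.lsingle (some (c, 0))
    | Option.some (b, n) => if lst b n = c then 0 else Finsupp.lsingle (some (b, n+1))

/-- Projection onto the span of words of length `≥ 1` ending with `c`. -/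
def pmap (c : Bool) : V →ₗ[ℂ] V :=
  Finsupp.lsum ℂ fun w => match w with
    | Option.none => 0
    | Option.some (b, n) => if lst b n = c then Finsupp.lsingle (some (b, n)) else 0

/-- Removing the last letter from words ending with `c`. -/
def smap (c : Bool) : V →ₗ[ℂ] V :=
  Finsupp.lsum ℂ fun w => match w with
    | Option.none => 0
    | Option.some (b, 0) => if b = c then Finsupp.lsingle none else 0
    | Option.some (b, n+1) => if lst b (n+1) = c then Finsupp.lsingle (some (b, n)) else 0

/-- Projection onto the span of the empty word. -/
def nmap : V →ₗ[ℂ] V := (Finsupp.lsingle none).comp (Finsupp.lapply none)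

end KoszulAux
-- part 2
namespace KoszulAux

lemma lst_not (b : Bool) (n : ℕ) : lst (!b) n = !(lst b n) := by
  unfold lst; split <;> simp

@[simp] lemma Lmap_none (c : Bool) (x : ℂ) :
    Lmap c (Finsupp.single none x) = Finsupp.single (some (c, 0)) x := by
  simp [Lmap]

@[simp] lemma Lmap_some (c b : Bool) (n : ℕ) (x : ℂ) :
    Lmap c (Finsupp.single (some (b, n)) x) =
      if b = c then 0 else Finsupp.single (some (c, n+1)) x := by
  simp only [Lmap, Finsupp.lsum_single]
  split <;> simp_all

@[simp] lemma Rmap_none (c : Bool) (x : ℂ) :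
    Rmap c (Finsupp.single none x) = Finsupp.single (some (c, 0)) x := by
  simp [Rmap]

@[simp] lemma Rmap_some (c b : Bool) (n : ℕ) (x : ℂ) :
    Rmap c (Finsupp.single (some (b, n)) x) =
      if lst b n = c then 0 else Finsupp.single (some (b, n+1)) x := by
  simp only [Rmap, Finsupp.lsum_single]
  split <;> simp_all

@[simp] lemma pmap_none (c : Bool) (x : ℂ) :
    pmap c (Finsupp.single none x) = 0 := by
  simp [pmap]

@[simp] lemma pmap_some (c b : Bool) (n : ℕ) (x : ℂ) :
    pmap c (Finsupp.single (some (b, n)) x) =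
      if lst b n = c then Finsupp.single (some (b, n)) x else 0 := by
  simp only [pmap, Finsupp.lsum_single]
  split <;> simp_all

@[simp] lemma smap_none (c : Bool) (x : ℂ) :
    smap c (Finsupp.single none x) = 0 := by
  simp [smap]

@[simp] lemma smap_some_zero (c b : Bool) (x : ℂ) :
    smap c (Finsupp.single (some (b, 0)) x) =
      if b = c then Finsupp.single none x else 0 := by
  simp only [smap, Finsupp.lsum_single]
  split <;> simp_all

@[simp] lemma smap_some_succ (c b : Bool) (n : ℕ) (x : ℂ) :
    smap c (Finsupp.single (some (b, n+1)) x) =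
      if lst b (n+1) = c then Finsupp.single (some (b, n)) x else 0 := by
  simp only [smap, Finsupp.lsum_single]
  split <;> simp_all

lemma Lmap_sq (c : Bool) : (Lmap c) ∘ₗ (Lmap c) = 0 := by
  apply Finsupp.lhom_ext
  rintro (_ | ⟨b, n⟩) x
  · simp
  · by_cases h : b = c <;> simp [h]

lemma Rmap_comm_Lmap (c b : Bool) : (Rmap c) ∘ₗ (Lmap b) = (Lmap b) ∘ₗ (Rmap c) := by
  apply Finsupp.lhom_ext
  rintro (_ | ⟨b', n⟩) x
  · simp only [LinearMap.comp_apply, Lmap_none, Rmap_none, Rmap_some, Lmap_some]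
    unfold lst
    rcases b <;> rcases c <;> simp
  · by_cases h : b' = b
    · subst h
      simp only [LinearMap.comp_apply, Lmap_some, if_pos rfl, map_zero, Rmap_some]
      by_cases hl : lst b' n = c <;> simp [hl]
    · have hb : b = !b' := by rcases b <;> rcases b' <;> simp_all
      simp only [LinearMap.comp_apply, Lmap_some, if_neg h, Rmap_some]
      by_cases hl : lst b' n = c
      · have hcond : lst b (n+1) = c := by
          rw [hb, lst_succ, lst_not, hl]; simp
        rw [if_pos hl, map_zero, if_pos hcond]
      · have hcond : ¬ lst b (n+1) = c := by
          rw [hb, lst_succ, lst_not]; simpa using hl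
        rw [if_neg hl, if_neg hcond, Lmap_some, if_neg h]

lemma smap_Rmap (c : Bool) : (smap c) ∘ₗ (Rmap c) = LinearMap.id - pmap c := by
  apply Finsupp.lhom_ext
  rintro (_ | ⟨b, n⟩) x
  · simp
  · by_cases hl : lst b n = c
    · simp [hl]
    · have : lst b (n+1) = c := by
        rw [lst_succ]; rcases hc : lst b n <;> rcases c <;> simp_all
      simp [hl, this]

lemma Rmap_smap (c : Bool) : (Rmap c) ∘ₗ (smap c) = pmap c := by
  apply Finsupp.lhom_ext
  rintro (_ | ⟨b, n⟩) x
  · simp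
  · rcases n with _ | n
    · by_cases h : b = c
      · subst h
        simp [lst]
      · have : lst b 0 = b := by simp [lst]
        simp [h, this]
    · by_cases hl : lst b (n+1) = c
      · have hl' : lst b n ≠ c := by
          rw [lst_succ] at hl; rcases hc : lst b n <;> rcases c <;> simp_all
        simp [hl, hl']
      · simp [hl]

lemma pmap_Rmap (c : Bool) : (pmap c) ∘ₗ (Rmap c) = Rmap c := by
  apply Finsupp.lhom_ext
  rintro (_ | ⟨b, n⟩) x
  · simp [lst]
  · by_cases hl : lst b n = c
    · simp [hl]
    · have : lst b (n+1) = c := by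
        rw [lst_succ]; rcases hc : lst b n <;> rcases c <;> simp_all
      simp [hl, this]

lemma pmap_Rmap_ne (c c' : Bool) (h : c ≠ c') : (pmap c) ∘ₗ (Rmap c') = 0 := by
  apply Finsupp.lhom_ext
  rintro (_ | ⟨b, n⟩) x
  · simp [lst, Ne.symm h]
  · by_cases hl : lst b n = c'
    · simp [hl]
    · have : lst b (n+1) = c' := by
        rw [lst_succ]; rcases hc : lst b n <;> rcases c' <;> simp_all
      simp [hl, this, Ne.symm h]

lemma pmap_decomp : pmap true + pmap false + nmap = LinearMap.id := by
  apply Finsupp.lhom_ext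
  rintro (_ | ⟨b, n⟩) x
  · simp [nmap]
  · rcases hl : lst b n <;> simp [nmap, hl, Finsupp.single_apply]

end KoszulAux
-- part 3: the algebra and its regular representation
namespace KoszulAux

/-- The generators of `AAlg`. -/
def gen (b : Bool) : AAlg := RingQuot.mkAlgHom ℂ ARel (FreeAlgebra.ι ℂ b)

lemma gen_sq (b : Bool) : gen b * gen b = 0 := by
  rw [gen, ← map_mul, RingQuot.mkAlgHom_rel ℂ (ARel.sq b), map_zero]

/-- The representation of `AAlg` on the vector space of alternating words. -/
def rho : AAlg →ₐ[ℂ] Module.End ℂ V :=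
  RingQuot.liftAlgHom ℂ ⟨FreeAlgebra.lift ℂ (fun b => Lmap b), by
    rintro x y ⟨c⟩
    rw [map_mul, map_zero, FreeAlgebra.lift_ι_apply, Module.End.mul_eq_comp, Lmap_sq]⟩

lemma rho_gen (b : Bool) : rho (gen b) = Lmap b := by
  rw [rho, gen, RingQuot.liftAlgHom_mkAlgHom_apply, FreeAlgebra.lift_ι_apply]

/-- The empty word. -/
def eps : V := Finsupp.single none 1

/-- `a ↦ ρ(a)(ε)`. -/
def phi : AAlg →ₗ[ℂ] V := (LinearMap.applyₗ eps).comp rho.toLinearMap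

lemma phi_apply (a : AAlg) : phi a = rho a eps := rfl

lemma phi_mul (a b : AAlg) : phi (a * b) = rho a (phi b) := by
  rw [phi_apply, phi_apply, map_mul, Module.End.mul_apply]

/-- Alternating word products: `wp n b` is the product of the `n+1` generators of the
alternating word of length `n+1` starting with `b`. -/
def wp : ℕ → Bool → AAlg
  | 0, b => gen b
  | n+1, b => gen b * wp n (!b)

/-- The product of the generators of an alternating word. -/
def wordProd : W → AAlg
  | none => 1
  | some (b, n) => wp n b

lemma phi_wp (n : ℕ) (b : Bool) : phi (wp n b) = Finsupp.single (some (b, n)) 1 := by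
  induction n generalizing b with
  | zero => rw [wp, phi_apply, rho_gen, eps, Lmap_none]
  | succ n ih =>
      rw [wp, phi_mul, ih, rho_gen, Lmap_some, if_neg (by simp)]

lemma phi_wordProd (w : W) : phi (wordProd w) = Finsupp.single w 1 := by
  rcases w with _ | ⟨b, n⟩
  · rw [wordProd, phi_apply, map_one, Module.End.one_apply, eps]
  · exact phi_wp n b

/-- The linear map `V → AAlg` sending a word to the product of its letters. -/
def sV : V →ₗ[ℂ] AAlg := Finsupp.lsum ℂ fun w => LinearMap.toSpanSingleton ℂ AAlg (wordProd w)

@[simp] lemma sV_single (w : W) (x : ℂ) : sV (Finsupp.single w x) = x • wordProd w := by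
  simp [sV, LinearMap.toSpanSingleton_apply]

lemma phi_sV : phi.comp sV = LinearMap.id := by
  apply Finsupp.lhom_ext
  intro w x
  simp only [LinearMap.comp_apply, sV_single, map_smul, phi_wordProd, LinearMap.id_apply]
  rw [Finsupp.smul_single, smul_eq_mul, mul_one]

lemma phi_sV_apply (x : V) : phi (sV x) = x := by
  have := congrArg (fun f => f x) phi_sV
  simpa using this

lemma adjoin_gen : Algebra.adjoin ℂ (Set.range gen) = ⊤ := by
  have h : Set.range gen = (RingQuot.mkAlgHom ℂ ARel) '' (Set.range (FreeAlgebra.ι ℂ)) := by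
    rw [← Set.range_comp]; rfl
  rw [h, ← AlgHom.map_adjoin, FreeAlgebra.adjoin_range_ι, Algebra.map_top]
  exact (AlgHom.range_eq_top (f := RingQuot.mkAlgHom ℂ ARel)).mpr (RingQuot.mkAlgHom_surjective ℂ ARel)

lemma gen_mul_wordProd (b : Bool) (w : W) :
    gen b * wordProd w ∈ Submodule.span ℂ (Set.range wordProd) := by
  rcases w with _ | ⟨b', n⟩
  · rw [wordProd, mul_one]
    exact Submodule.subset_span ⟨some (b, 0), rfl⟩
  · by_cases h : b' = b
    · subst h
      rcases n with _ | n
      · rw [wordProd, wp, gen_sq]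
        exact Submodule.zero_mem _
      · rw [wordProd, wp, ← mul_assoc, gen_sq, zero_mul]
        exact Submodule.zero_mem _
    · have hb' : b' = !b := by rcases b <;> rcases b' <;> simp_all
      subst hb'
      have : gen b * wordProd (some (!b, n)) = wordProd (some (b, n+1)) := by
        rw [wordProd, wordProd, wp]
      rw [this]
      exact Submodule.subset_span ⟨some (b, n+1), rfl⟩

lemma span_wordProd : Submodule.span ℂ (Set.range wordProd) = ⊤ := by
  set S := Submodule.span ℂ (Set.range wordProd) with hS
  have hgen : ∀ b : Bool, ∀ y ∈ S, gen b * y ∈ S := by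
    intro b y hy
    have hmap : Submodule.map (LinearMap.mulLeft ℂ (gen b)) S ≤ S := by
      rw [hS, Submodule.map_span, Submodule.span_le]
      rintro _ ⟨_, ⟨w, rfl⟩, rfl⟩
      exact gen_mul_wordProd b w
    exact hmap ⟨y, hy, rfl⟩
  let T : Subalgebra ℂ AAlg :=
    { carrier := {x | ∀ y ∈ S, x * y ∈ S}
      mul_mem' := fun {x₁} {x₂} h1 h2 y hy => by
        rw [mul_assoc]; exact h1 _ (h2 y hy)
      one_mem' := fun y hy => by rwa [one_mul]
      add_mem' := fun {x₁} {x₂} h1 h2 y hy => by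
        rw [add_mul]; exact S.add_mem (h1 y hy) (h2 y hy)
      zero_mem' := fun y hy => by rw [zero_mul]; exact S.zero_mem
      algebraMap_mem' := fun c y hy => by
        rw [← Algebra.smul_def]; exact S.smul_mem c hy }
  have hT : ∀ x : AAlg, x ∈ T := by
    intro x
    have h1 : Algebra.adjoin ℂ (Set.range gen) ≤ T := by
      apply Algebra.adjoin_le
      rintro _ ⟨b, rfl⟩
      exact hgen b
    rw [adjoin_gen] at h1
    exact h1 trivial
  have h1S : (1 : AAlg) ∈ S := Submodule.subset_span ⟨none, rfl⟩
  rw [Submodule.eq_top_iff']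
  intro x
  have := hT x 1 h1S
  rwa [mul_one] at this

lemma sV_surjective : Function.Surjective sV := by
  intro a
  have haS : a ∈ Submodule.span ℂ (Set.range wordProd) := by
    rw [span_wordProd]; trivial
  have hle : Submodule.span ℂ (Set.range wordProd) ≤ LinearMap.range sV := by
    rw [Submodule.span_le]
    rintro _ ⟨w, rfl⟩
    exact ⟨Finsupp.single w 1, by simp⟩
  exact hle haS

lemma phi_injective : Function.Injective phi := by
  intro a b h
  obtain ⟨x, rfl⟩ := sV_surjective a
  obtain ⟨y, rfl⟩ := sV_surjective b
  rw [phi_sV_apply, phi_sV_apply] at h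
  rw [h]

lemma sV_phi (a : AAlg) : sV (phi a) = a := by
  apply phi_injective
  rw [phi_sV_apply]

end KoszulAux


-- part 4: right multiplication and kernels
namespace KoszulAux

lemma rho_comm_Rmap (c : Bool) (a : AAlg) :
    (Rmap c).comp (rho a) = (rho a).comp (Rmap c) := by
  have h : rho a ∈ Subalgebra.centralizer ℂ {Rmap c} := by
    have hmem : a ∈ (⊤ : Subalgebra ℂ AAlg) := trivial
    rw [← adjoin_gen] at hmem
    have h2 : Algebra.adjoin ℂ (Set.range gen) ≤
        (Subalgebra.centralizer ℂ {Rmap c}).comap rho := by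
      apply Algebra.adjoin_le
      rintro _ ⟨b, rfl⟩
      rintro x hx
      rw [Set.mem_singleton_iff] at hx
      subst hx
      show Rmap c * rho (gen b) = rho (gen b) * Rmap c
      rw [rho_gen, Module.End.mul_eq_comp, Module.End.mul_eq_comp, Rmap_comm_Lmap]
    exact h2 hmem
  rw [Subalgebra.mem_centralizer_iff] at h
  have := h (Rmap c) rfl
  rwa [Module.End.mul_eq_comp, Module.End.mul_eq_comp] at this

lemma phi_mul_gen (a : AAlg) (c : Bool) : phi (a * gen c) = Rmap c (phi a) := by
  rw [phi_mul, phi_apply, rho_gen]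
  have h1 : Lmap c eps = Rmap c eps := by rw [eps, Lmap_none, Rmap_none]
  rw [phi_apply, h1]
  have := congrArg (fun f => f eps) (rho_comm_Rmap c a)
  simpa using this.symm

lemma Aaug_gen (b : Bool) : Aaug (gen b) = 0 := by
  rw [Aaug, gen, RingQuot.liftAlgHom_mkAlgHom_apply, FreeAlgebra.lift_ι_apply]

lemma Aaug_wordProd (w : W) : Aaug (wordProd w) = if w = none then 1 else 0 := by
  rcases w with _ | ⟨b, n⟩
  · rw [wordProd, map_one]; simp
  · rcases n with _ | n
    · rw [wordProd, wp, Aaug_gen]; simp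
    · rw [wordProd, wp, map_mul, Aaug_gen, zero_mul]; simp

lemma Aaug_phi (a : AAlg) : Aaug a = phi a none := by
  obtain ⟨x, rfl⟩ := sV_surjective a
  rw [phi_sV_apply]
  induction x using Finsupp.induction_linear with
  | zero => simp
  | add f g hf hg => rw [map_add, map_add, hf, hg, Finsupp.add_apply]
  | single w x =>
      rw [sV_single, map_smul, Aaug_wordProd, Finsupp.single_apply, smul_eq_mul]
      rcases w with _ | w <;> simp

lemma mul_gen_cancel {a b : AAlg} (h : a * gen true + b * gen false = 0) :
    a * gen true = 0 ∧ b * gen false = 0 := by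
  have hphi : Rmap true (phi a) + Rmap false (phi b) = 0 := by
    rw [← phi_mul_gen, ← phi_mul_gen, ← map_add, h, map_zero]
  constructor
  · apply phi_injective
    rw [phi_mul_gen, map_zero]
    have := congrArg (pmap true) hphi
    rw [map_add, map_zero] at this
    rw [show pmap true (Rmap true (phi a)) = Rmap true (phi a) from
        congrArg (fun f => f (phi a)) (pmap_Rmap true)] at this
    rw [show pmap true (Rmap false (phi b)) = 0 from
        congrArg (fun f => f (phi b)) (pmap_Rmap_ne true false (by simp))] at this
    rwa [add_zero] at this
  · apply phi_injective
    rw [phi_mul_gen, map_zero]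
    have := congrArg (pmap false) hphi
    rw [map_add, map_zero] at this
    rw [show pmap false (Rmap false (phi b)) = Rmap false (phi b) from
        congrArg (fun f => f (phi b)) (pmap_Rmap false)] at this
    rw [show pmap false (Rmap true (phi a)) = 0 from
        congrArg (fun f => f (phi a)) (pmap_Rmap_ne false true (by simp))] at this
    rwa [zero_add] at this

lemma exists_of_mul_gen_eq_zero {c : Bool} {a : AAlg} (h : a * gen c = 0) :
    ∃ b, b * gen c = a := by
  have hR : Rmap c (phi a) = 0 := by
    rw [← phi_mul_gen, h, map_zero]
  have h1 : phi a - pmap c (phi a) = 0 := by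
    have := congrArg (fun f => f (phi a)) (smap_Rmap c)
    simp only [LinearMap.comp_apply, LinearMap.sub_apply, LinearMap.id_apply] at this
    rw [hR, map_zero] at this
    exact this.symm
  have h2 : phi a = Rmap c (smap c (phi a)) := by
    have := congrArg (fun f => f (phi a)) (Rmap_smap c)
    simp only [LinearMap.comp_apply] at this
    rw [this]
    have := sub_eq_zero.mp h1
    exact this
  refine ⟨sV (smap c (phi a)), phi_injective ?_⟩
  rw [phi_mul_gen, phi_sV_apply, ← h2]

lemma exists_of_aug_eq_zero {a : AAlg} (h : Aaug a = 0) :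
    ∃ u v, u * gen true + v * gen false = a := by
  refine ⟨sV (smap true (phi a)), sV (smap false (phi a)), phi_injective ?_⟩
  rw [map_add, phi_mul_gen, phi_mul_gen, phi_sV_apply, phi_sV_apply]
  have ht := congrArg (fun f => f (phi a)) (Rmap_smap true)
  have hf := congrArg (fun f => f (phi a)) (Rmap_smap false)
  simp only [LinearMap.comp_apply] at ht hf
  rw [ht, hf]
  have hd := congrArg (fun f => f (phi a)) pmap_decomp
  simp only [LinearMap.add_apply, LinearMap.id_apply] at hd
  have hn : nmap (phi a) = 0 := by
    rw [nmap, LinearMap.comp_apply]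
    have h2 : (Finsupp.lapply none : V →ₗ[ℂ] ℂ) (phi a) = phi a none := rfl
    rw [h2, ← Aaug_phi, h]
    simp
  rw [hn, add_zero] at hd
  exact hd

lemma Aaug_surjective : Function.Surjective Aaug := fun z =>
  ⟨algebraMap ℂ AAlg z, by rw [AlgHom.commutes, Algebra.algebraMap_self_apply]⟩

end KoszulAux


-- part 5: the projective resolution
namespace KoszulAux

open CategoryTheory

/-- Degree-`n` term of the resolution. -/
def PX : ℕ → ModuleCat AAlg
  | 0 => ModuleCat.of AAlg AAlg
  | _+1 => ModuleCat.of AAlg (AAlg × AAlg)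

/-- `(a, b) ↦ a ψ⁺ + b ψ⁻`. -/
def d10' : (AAlg × AAlg) →ₗ[AAlg] AAlg :=
  (LinearMap.toSpanSingleton AAlg AAlg (gen true)).coprod
    (LinearMap.toSpanSingleton AAlg AAlg (gen false))

/-- `(a, b) ↦ (a ψ⁺, b ψ⁻)`. -/
def dmm' : (AAlg × AAlg) →ₗ[AAlg] (AAlg × AAlg) :=
  LinearMap.prodMap (LinearMap.toSpanSingleton AAlg AAlg (gen true))
    (LinearMap.toSpanSingleton AAlg AAlg (gen false))

lemma d10'_apply (a b : AAlg) : d10' (a, b) = a * gen true + b * gen false := by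
  simp [d10', LinearMap.toSpanSingleton_apply, smul_eq_mul]

lemma dmm'_apply (a b : AAlg) : dmm' (a, b) = (a * gen true, b * gen false) := by
  simp [dmm', LinearMap.toSpanSingleton_apply, smul_eq_mul]

/-- The differentials of the resolution. -/
def Pd : ∀ n : ℕ, PX (n+1) ⟶ PX n
  | 0 => ModuleCat.ofHom d10'
  | _+1 => ModuleCat.ofHom dmm'

lemma Pd_sq (n : ℕ) : Pd (n+1) ≫ Pd n = 0 := by
  rcases n with _ | n
  · apply ModuleCat.hom_ext
    apply LinearMap.ext
    rintro ⟨a, b⟩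
    show d10' (dmm' (a, b)) = 0
    rw [dmm'_apply, d10'_apply, mul_assoc, gen_sq, mul_zero, mul_assoc, gen_sq, mul_zero,
      add_zero]
  · apply ModuleCat.hom_ext
    apply LinearMap.ext
    rintro ⟨a, b⟩
    show dmm' (dmm' (a, b)) = 0
    rw [dmm'_apply a b, dmm'_apply, mul_assoc, gen_sq, mul_zero, mul_assoc, gen_sq, mul_zero]
    rfl

/-- The resolution complex `⋯ → A² → A² → A`. -/
def Pcx : ChainComplex (ModuleCat AAlg) ℕ := ChainComplex.of PX Pd Pd_sq

@[simp] lemma Pcx_d (n : ℕ) : Pcx.d (n+1) n = Pd n := ChainComplex.of_d PX Pd n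

/-- The augmentation as an `AAlg`-linear map to the trivial module. -/
def augLin : AAlg →ₗ[AAlg] ℂ where
  toFun a := Aaug a
  map_add' a b := map_add Aaug a b
  map_smul' r a := by
    show Aaug (r * a) = Aaug r * Aaug a
    exact map_mul Aaug r a

/-- The augmentation as a morphism `PX 0 ⟶ Ctriv`. -/
def augHom : PX 0 ⟶ Ctriv := ModuleCat.ofHom augLin

lemma d10_augHom : Pcx.d 1 0 ≫ augHom = 0 := by
  rw [show (1 : ℕ) = 0 + 1 from rfl, Pcx_d]
  apply ModuleCat.hom_ext
  apply LinearMap.ext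
  rintro ⟨a, b⟩
  show Aaug (d10' (a, b)) = 0
  rw [d10'_apply, map_add, map_mul, map_mul, Aaug_gen, Aaug_gen, mul_zero, mul_zero, add_zero]

lemma Pcx_exactAt_succ (n : ℕ) : Pcx.ExactAt (n + 1) := by
  rw [HomologicalComplex.exactAt_iff' _ (n + 1 + 1) (n + 1) n (by simp) (by simp)]
  rw [ShortComplex.moduleCat_exact_iff]
  rcases n with _ | n
  · intro x hx
    have hx' : d10' x = 0 := by
      have h := hx
      rwa [show (Pcx.sc' 2 1 0).g = Pd 0 from Pcx_d 0, Pd] at h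
    rcases x with ⟨a, b⟩
    rw [d10'_apply] at hx'
    obtain ⟨u, hu⟩ := exists_of_mul_gen_eq_zero (mul_gen_cancel hx').1
    obtain ⟨v, hv⟩ := exists_of_mul_gen_eq_zero (mul_gen_cancel hx').2
    refine ⟨(u, v), ?_⟩
    rw [show (Pcx.sc' 2 1 0).f = Pd 1 from Pcx_d 1, Pd]
    show dmm' (u, v) = (a, b)
    rw [dmm'_apply, hu, hv]
  · intro x hx
    have hx' : dmm' x = 0 := by
      have h := hx
      rwa [show (Pcx.sc' (n+1+1+1) (n+1+1) (n+1)).g = Pd (n+1) from Pcx_d (n+1), Pd] at h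
    rcases x with ⟨a, b⟩
    rw [dmm'_apply, Prod.mk_eq_zero] at hx'
    obtain ⟨u, hu⟩ := exists_of_mul_gen_eq_zero hx'.1
    obtain ⟨v, hv⟩ := exists_of_mul_gen_eq_zero hx'.2
    refine ⟨(u, v), ?_⟩
    rw [show (Pcx.sc' (n+1+1+1) (n+1+1) (n+1)).f = Pd (n+1+1) from Pcx_d (n+1+1), Pd]
    show dmm' (u, v) = (a, b)
    rw [dmm'_apply, hu, hv]

/-- The projective resolution of the trivial module. -/
def Pres : ProjectiveResolution Ctriv where
  complex := Pcx
  projective n := by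
    rcases n with _ | n
    · exact ModuleCat.projective_of_free (Module.Basis.singleton PUnit.{1} AAlg)
    · exact ModuleCat.projective_of_free
        ((Module.Basis.singleton PUnit.{1} AAlg).prod (Module.Basis.singleton PUnit.{1} AAlg))
  π := (ChainComplex.toSingle₀Equiv Pcx Ctriv).symm ⟨augHom, d10_augHom⟩
  quasiIso := ⟨fun n => by
    cases n with
    | zero =>
      rw [ChainComplex.quasiIsoAt₀_iff, ShortComplex.quasiIso_iff_of_zeros']
      · constructor
        · rw [ShortComplex.moduleCat_exact_iff]
          intro x hx
          have hτ : ((ChainComplex.toSingle₀Equiv Pcx Ctriv).symm ⟨augHom, d10_augHom⟩).f 0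
              = augHom := ChainComplex.toSingle₀Equiv_symm_apply_f_zero _ _
          have hx' : Aaug x = 0 := by
            have h2 : (((ChainComplex.toSingle₀Equiv Pcx Ctriv).symm
                ⟨augHom, d10_augHom⟩).f 0) x = 0 := hx
            rwa [hτ] at h2
          obtain ⟨u, v, huv⟩ := exists_of_aug_eq_zero hx'
          refine ⟨(u, v), ?_⟩
          have hf : (Pcx.sc' 1 0 0).f = Pd 0 := Pcx_d 0
          show (Pcx.sc' 1 0 0).f (u, v) = x
          rw [hf, Pd]
          show d10' (u, v) = x
          rw [d10'_apply, huv]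
        · have hτ : ((ChainComplex.toSingle₀Equiv Pcx Ctriv).symm ⟨augHom, d10_augHom⟩).f 0
              = augHom := ChainComplex.toSingle₀Equiv_symm_apply_f_zero _ _
          show Epi (((ChainComplex.toSingle₀Equiv Pcx Ctriv).symm ⟨augHom, d10_augHom⟩).f 0)
          rw [hτ]
          exact (ModuleCat.epi_iff_surjective (f := augHom)).mpr Aaug_surjective
      all_goals rfl
    | succ n =>
      rw [quasiIsoAt_iff_exactAt']
      · exact Pcx_exactAt_succ n
      · apply ChainComplex.exactAt_succ_single_obj⟩

end KoszulAux


-- part 6: the Hom complex and the Ext computation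
namespace KoszulAux

open CategoryTheory

lemma triv_smul (r : AAlg) (z : ℂ) : r • z = Aaug r * z := rfl

lemma comp_toCtriv_d10 (f : PX 0 ⟶ Ctriv) (a b : AAlg) : f (d10' (a, b)) = 0 := by
  have h1 : ∀ (x : AAlg) (c : Bool), f (x * gen c) = 0 := by
    intro x c
    have hx : x * gen c = (x * gen c) • (1 : AAlg) := by rw [smul_eq_mul, mul_one]
    erw [hx, map_smul, triv_smul, map_mul, Aaug_gen, mul_zero, zero_mul]
    rfl
  erw [d10'_apply, map_add, h1, h1, add_zero]

lemma comp_toCtriv_dmm (f : PX 1 ⟶ Ctriv) (a b : AAlg) : f (dmm' (a, b)) = 0 := by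
  have hsplit : dmm' (a, b) =
      (a * gen true) • ((1 : AAlg), (0 : AAlg)) + (b * gen false) • ((0 : AAlg), (1 : AAlg)) := by
    rw [dmm'_apply]
    show (a * gen true, b * gen false) =
      (a * gen true * 1, a * gen true * 0) + (b * gen false * 0, b * gen false * 1)
    rw [mul_one, mul_zero, mul_zero, mul_one, Prod.mk_add_mk, add_zero, zero_add]
  erw [hsplit, map_add, map_smul, map_smul, triv_smul, triv_smul, map_mul, map_mul,
    Aaug_gen, Aaug_gen, mul_zero, mul_zero, zero_mul, zero_mul, add_zero]
  rfl

lemma Kc_d_zero (i j : ℕ) : (Pcx.linearYonedaObj ℂ Ctriv).d i j = 0 := by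
  rw [ChainComplex.linearYonedaObj_d]
  apply ModuleCat.hom_ext
  apply LinearMap.ext
  intro f
  show Pcx.d j i ≫ f = 0
  by_cases h : j = i + 1
  · subst h
    rw [Pcx_d]
    rcases i with _ | i
    · apply ModuleCat.hom_ext
      apply LinearMap.ext
      rintro ⟨a, b⟩
      exact comp_toCtriv_d10 f a b
    · apply ModuleCat.hom_ext
      apply LinearMap.ext
      rintro ⟨a, b⟩
      exact comp_toCtriv_dmm f a b
  · have hsh : Pcx.d j i = 0 := by
      apply Pcx.shape
      simp only [ComplexShape.down_Rel]
      exact fun hh => h hh.symm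
    rw [hsh, Limits.zero_comp]

/-- Homology of a complex with zero differentials. -/
def KcHomologyIso (n : ℕ) :
    (Pcx.linearYonedaObj ℂ Ctriv).homology n ≅ (Pcx.linearYonedaObj ℂ Ctriv).X n :=
  (ShortComplex.LeftHomologyData.ofZeros ((Pcx.linearYonedaObj ℂ Ctriv).sc n)
    (Kc_d_zero _ _) (Kc_d_zero _ _)).homologyIso

/-- Identity cast from the trivial module to `ℂ`. -/
def toC (z : Ctriv) : ℂ := z

/-- Identity cast from the degree-zero term to `AAlg`. -/
def toA (a : PX 0) : AAlg := a

/-- `Hom_A(A, ℂ) ≃ ℂ`. -/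
def hom0equiv : (PX 0 ⟶ Ctriv) ≃ₗ[ℂ] ℂ where
  toFun f := toC (f (1 : AAlg))
  map_add' f g := rfl
  map_smul' c f := by
    show Aaug (algebraMap ℂ AAlg c) * toC (f (1 : AAlg)) = c * toC (f (1 : AAlg))
    rw [AlgHom.commutes, Algebra.algebraMap_self_apply]
  invFun z := ModuleCat.ofHom
    { toFun := fun a => ((Aaug a * z : ℂ) : Ctriv)
      map_add' := fun a b => by
        show (Aaug (a + b) * z : ℂ) = Aaug a * z + Aaug b * z
        rw [map_add, add_mul]
      map_smul' := fun r a => by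
        show (Aaug (r * a) * z : ℂ) = Aaug r * (Aaug a * z)
        rw [map_mul, mul_assoc] }
  left_inv f := by
    apply ModuleCat.hom_ext
    apply LinearMap.ext
    intro a
    show (Aaug (toA a) * toC (f (1 : AAlg)) : ℂ) = toC (f a)
    have hA : a = toA a • (1 : AAlg) := (mul_one (toA a)).symm
    have h2 : f a = toA a • f (1 : AAlg) :=
      (congrArg f.hom hA).trans (map_smul f.hom (toA a) (1 : AAlg))
    rw [congrArg toC h2]
    rfl
  right_inv z := by
    show (Aaug (1 : AAlg) * z : ℂ) = z
    rw [map_one, one_mul]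

/-- `Hom_A(A², ℂ) ≃ ℂ²`. -/
def hom1equiv (n : ℕ) : (PX (n+1) ⟶ Ctriv) ≃ₗ[ℂ] ℂ × ℂ where
  toFun f := (toC (f ((1 : AAlg), (0 : AAlg))), toC (f ((0 : AAlg), (1 : AAlg))))
  map_add' f g := rfl
  map_smul' c f := by
    show (Aaug (algebraMap ℂ AAlg c) * toC (f ((1 : AAlg), (0 : AAlg))),
        Aaug (algebraMap ℂ AAlg c) * toC (f ((0 : AAlg), (1 : AAlg))))
      = c • (toC (f ((1 : AAlg), (0 : AAlg))), toC (f ((0 : AAlg), (1 : AAlg))))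
    rw [AlgHom.commutes, Prod.smul_mk, smul_eq_mul, smul_eq_mul]
    simp only [Algebra.algebraMap_self_apply]
  invFun z := ModuleCat.ofHom
    { toFun := fun a => ((Aaug a.1 * z.1 + Aaug a.2 * z.2 : ℂ) : Ctriv)
      map_add' := fun a b => by
        show (Aaug (a.1 + b.1) * z.1 + Aaug (a.2 + b.2) * z.2 : ℂ)
          = (Aaug a.1 * z.1 + Aaug a.2 * z.2) + (Aaug b.1 * z.1 + Aaug b.2 * z.2)
        rw [map_add, map_add, add_mul, add_mul]
        ring
      map_smul' := fun r a => by
        show (Aaug (r * a.1) * z.1 + Aaug (r * a.2) * z.2 : ℂ)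
          = Aaug r * (Aaug a.1 * z.1 + Aaug a.2 * z.2)
        rw [map_mul, map_mul, mul_add, mul_assoc, mul_assoc] }
  left_inv f := by
    apply ModuleCat.hom_ext
    apply LinearMap.ext
    rintro ⟨a, b⟩
    show (Aaug a * toC (f ((1 : AAlg), (0 : AAlg)))
        + Aaug b * toC (f ((0 : AAlg), (1 : AAlg))) : ℂ) = toC (f ((a, b) : AAlg × AAlg))
    have hab : ((a, b) : AAlg × AAlg)
        = a • ((1 : AAlg), (0 : AAlg)) + b • ((0 : AAlg), (1 : AAlg)) := by
      rw [Prod.smul_mk, Prod.smul_mk, smul_eq_mul, smul_eq_mul, smul_eq_mul, smul_eq_mul,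
        mul_one, mul_zero, mul_zero, mul_one, Prod.mk_add_mk, add_zero, zero_add]
    rw [show f ((a, b) : AAlg × AAlg)
        = a • f ((1 : AAlg), (0 : AAlg)) + b • f ((0 : AAlg), (1 : AAlg)) by
      erw [hab, map_add, map_smul, map_smul]]
    rfl
  right_inv z := by
    show ((Aaug (1 : AAlg) * z.1 + Aaug (0 : AAlg) * z.2 : ℂ),
        (Aaug (0 : AAlg) * z.1 + Aaug (1 : AAlg) * z.2 : ℂ)) = z
    simp

lemma finrank_ext (n : ℕ) :
    Module.finrank ℂ (((Ext ℂ (ModuleCat AAlg) n).obj (Opposite.op Ctriv)).obj Ctriv)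
      = Module.finrank ℂ ((Pcx.linearYonedaObj ℂ Ctriv).X n : ModuleCat ℂ) :=
  LinearEquiv.finrank_eq ((Pres.isoExt n Ctriv ≪≫ KcHomologyIso n).toLinearEquiv)

end KoszulAux


/-- **Koszul duality computation in Proposition 5.1.1**:
`Ext•_A(ℂ,ℂ) ≅ A^! = ℂ[x,y]/(xy)`, which is one-dimensional in degree `0`
and two-dimensional in each degree `n ≥ 1`. -/
theorem ext_trivial_module_AAlg :
    Module.finrank ℂ (((Ext ℂ (ModuleCat AAlg) 0).obj (Opposite.op Ctriv)).obj Ctriv) = 1 ∧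
    ∀ n : ℕ, 1 ≤ n →
      Module.finrank ℂ (((Ext ℂ (ModuleCat AAlg) n).obj (Opposite.op Ctriv)).obj Ctriv) = 2 := by
  constructor
  · exact (KoszulAux.finrank_ext 0).trans
      ((LinearEquiv.finrank_eq KoszulAux.hom0equiv).trans (Module.finrank_self ℂ))
  · intro n hn
    obtain ⟨m, rfl⟩ : ∃ m, n = m + 1 := ⟨n - 1, by omega⟩
    refine (KoszulAux.finrank_ext (m + 1)).trans
      ((LinearEquiv.finrank_eq (KoszulAux.hom1equiv m)).trans ?_)
    rw [Module.finrank_prod, Module.finrank_self]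

end
end
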